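/- For any τ ∈ (0,1) and any reals x, t, there exists V with min(τ,1−τ) ≤ V ≤ max(τ,1−τ) such that ρ_τ(x − t) − ρ_τ(x) = −g_τ(x) t + V t². -/

import Mathlib

noncomputable def rho (τ x : ℝ) : ℝ := |τ - (if x < 0 then 1 else 0)| * x ^ 2

noncomputable def g (τ x : ℝ) : ℝ := if 0 ≤ x then 2 * τ * x else 2 * (1 - τ) * x

theorem expectile_loss_taylor (τ : ℝ) (hτ : τ ∈ Set.Ioo (0 : ℝ) 1) (x t : ℝ) :
    ∃ V : ℝ, min τ (1 - τ) ≤ V ∧ V ≤ max τ (1 - τ) ∧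
      rho τ (x - t) - rho τ x = -(g τ x) * t + V * t ^ 2 := by
  obtain ⟨hτ0, hτ1⟩ := hτ
  have habs0 : |τ - (0:ℝ)| = τ := by rw [sub_zero, abs_of_pos hτ0]
  have habs1 : |τ - (1:ℝ)| = 1 - τ := by rw [abs_of_neg (by linarith)]; ring
  rcases le_or_gt 0 x with hx | hx <;> rcases le_or_gt 0 (x - t) with hxt | hxt
  · -- x ≥ 0, x - t ≥ 0
    refine ⟨τ, min_le_left _ _, le_max_left _ _, ?_⟩
    simp only [rho, g, if_pos hx, if_neg (not_lt.mpr hx), if_neg (not_lt.mpr hxt), habs0]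
    ring
  · -- x ≥ 0, x - t < 0, so t > 0
    have ht : 0 < t := by linarith
    have ht2 : (0:ℝ) < t ^ 2 := by nlinarith
    set lam : ℝ := (x - t) ^ 2 / t ^ 2 with hlam
    have hlam0 : 0 ≤ lam := by positivity
    have hlam1 : lam ≤ 1 := by
      rw [hlam, div_le_one ht2]; nlinarith
    refine ⟨τ + (1 - 2 * τ) * lam, ?_, ?_, ?_⟩
    · have h1 : min τ (1 - τ) ≤ τ := min_le_left _ _
      have h2 : min τ (1 - τ) ≤ 1 - τ := min_le_right _ _
      nlinarith
    · have h1 : τ ≤ max τ (1 - τ) := le_max_left _ _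
      have h2 : 1 - τ ≤ max τ (1 - τ) := le_max_right _ _
      nlinarith
    · simp only [rho, g, if_pos hx, if_neg (not_lt.mpr hx), if_pos hxt, habs0, habs1]
      rw [hlam]
      field_simp
      ring
  · -- x < 0, x - t ≥ 0, so t < 0
    have ht : t < 0 := by linarith
    have ht2 : (0:ℝ) < t ^ 2 := by nlinarith
    set lam : ℝ := (x - t) ^ 2 / t ^ 2 with hlam
    have hlam0 : 0 ≤ lam := by positivity
    have hlam1 : lam ≤ 1 := by
      rw [hlam, div_le_one ht2]; nlinarith
    refine ⟨(1 - τ) + (2 * τ - 1) * lam, ?_, ?_, ?_⟩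
    · have h1 : min τ (1 - τ) ≤ τ := min_le_left _ _
      have h2 : min τ (1 - τ) ≤ 1 - τ := min_le_right _ _
      nlinarith
    · have h1 : τ ≤ max τ (1 - τ) := le_max_left _ _
      have h2 : 1 - τ ≤ max τ (1 - τ) := le_max_right _ _
      nlinarith
    · simp only [rho, g, if_neg (not_le.mpr hx), if_pos hx, if_neg (not_lt.mpr hxt), habs0, habs1]
      rw [hlam]
      field_simp [ht.ne]
      ring
  · -- x < 0, x - t < 0
    refine ⟨1 - τ, min_le_right _ _, le_max_right _ _, ?_⟩
    simp only [rho, g, if_neg (not_le.mpr hx), if_pos hx, if_pos hxt, habs1]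
    ring
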